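/- Let n ≥ 2 and let A, B be convex bodies in ℝⁿ. Suppose that for every convex body K in ℝⁿ and every (n−1)-dimensional linear subspace E of ℝⁿ one has vol_{n-1}(E ∩ (A + K)) ≤ vol_{n-1}(E ∩ (B + K)). Then A − A ⊆ B − B; in particular, there exist x_A, x_B ∈ ℝⁿ such that A + x_A ⊆ B − B and B − B ⊆ (n+1)·(B + x_B). -/

import Mathlib

open MeasureTheory Pointwise

/-- If some `a ∈ A` has `f a` strictly larger than `sup f B`, we can build a convex body `K`
and a hyperplane `E = ker f` such that `E` misses `B + K` but meets the interior of `A + K`,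
contradicting the section-volume hypothesis. -/
lemma aux_contra (n : ℕ) {A B : Set (EuclideanSpace ℝ (Fin n))}
    (h : ∀ K : Set (EuclideanSpace ℝ (Fin n)),
        IsCompact K → Convex ℝ K → (interior K).Nonempty →
        ∀ E : Submodule ℝ (EuclideanSpace ℝ (Fin n)), Module.finrank ℝ E = n - 1 →
        volume ((↑) ⁻¹' (A + K) : Set E) ≤ volume ((↑) ⁻¹' (B + K) : Set E))
    (f : EuclideanSpace ℝ (Fin n) →L[ℝ] ℝ) (u : EuclideanSpace ℝ (Fin n)) (hu : f u = 1)
    (a : EuclideanSpace ℝ (Fin n)) (ha : a ∈ A)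
    (c : ℝ) (hc : ∀ b ∈ B, f b ≤ c) (hca : c < f a) : False := by
  set δ : ℝ := f a - c with hδdef
  have hδ : 0 < δ := by simp [hδdef]; linarith
  set ρ : ℝ := δ / (2 * (‖f‖ + 1)) with hρdef
  have hfn : (0:ℝ) ≤ ‖f‖ := norm_nonneg _
  have hρ : 0 < ρ := by
    apply div_pos hδ
    positivity
  have hρf : ‖f‖ * ρ < δ := by
    rw [hρdef]
    rw [div_eq_inv_mul, ← mul_assoc]
    have h1 : ‖f‖ * (2 * (‖f‖ + 1))⁻¹ < 1 := by
      rw [mul_inv_lt_iff₀ (by positivity)]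
      nlinarith
    nlinarith
  set ctr : EuclideanSpace ℝ (Fin n) := (-(f a)) • u with hctr
  set K : Set (EuclideanSpace ℝ (Fin n)) := Metric.closedBall ctr ρ with hK
  have hK₁ : IsCompact K := isCompact_closedBall _ _
  have hK₂ : Convex ℝ K := convex_closedBall _ _
  have hK₃ : (interior K).Nonempty :=
    ⟨ctr, Metric.ball_subset_interior_closedBall (Metric.mem_ball_self hρ)⟩
  set g : EuclideanSpace ℝ (Fin n) →ₗ[ℝ] ℝ := (f : EuclideanSpace ℝ (Fin n) →ₗ[ℝ] ℝ) with hg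
  set E : Submodule ℝ (EuclideanSpace ℝ (Fin n)) := LinearMap.ker g with hE
  have hgapp : ∀ x, g x = f x := fun x => rfl
  have hfr : Module.finrank ℝ E = n - 1 := by
    have hsurj : Function.Surjective g := by
      intro r
      exact ⟨r • u, by simp [hgapp, hu]⟩
    have h2 := LinearMap.finrank_range_add_finrank_ker g
    rw [LinearMap.range_eq_top.mpr hsurj, finrank_top] at h2
    rw [Module.finrank_self] at h2
    rw [finrank_euclideanSpace_fin] at h2
    set m := Module.finrank ℝ E
    omega
  have hle := h K hK₁ hK₂ hK₃ E hfr
  -- the B-side slice is empty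
  have hfk : ∀ k ∈ K, f k ≤ -(f a) + ‖f‖ * ρ := by
    intro k hk
    have hdist : ‖k - ctr‖ ≤ ρ := by
      rw [← dist_eq_norm]; exact Metric.mem_closedBall.mp hk
    have h1 : f (k - ctr) ≤ ‖f‖ * ρ := by
      calc f (k - ctr) ≤ |f (k - ctr)| := le_abs_self _
        _ = ‖f (k - ctr)‖ := rfl
        _ ≤ ‖f‖ * ‖k - ctr‖ := f.le_opNorm _
        _ ≤ ‖f‖ * ρ := by nlinarith
    have h2 : f ctr = -(f a) := by simp [hctr, hu]
    have h3 : f k = f ctr + f (k - ctr) := by rw [← map_add]; congr 1; abel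
    rw [h3, h2]; linarith
  have hBz : ((↑) ⁻¹' (B + K) : Set E) = ∅ := by
    ext x
    simp only [Set.mem_preimage, Set.mem_empty_iff_false, iff_false]
    rintro ⟨b, hb, k, hk, hbk⟩
    have hx0 : f (x : EuclideanSpace ℝ (Fin n)) = 0 := x.2
    have h1 : f b ≤ c := hc b hb
    have h2 : f k ≤ -(f a) + ‖f‖ * ρ := hfk k hk
    have h3 : f ((x : EuclideanSpace ℝ (Fin n))) = f b + f k := by rw [← hbk, map_add]
    rw [hx0] at h3
    have : δ = f a - c := hδdef
    linarith
  -- the A-side slice has positive volume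
  have hy : a + ctr ∈ interior (A + K) := by
    have hopen : IsOpen (A + Metric.ball ctr ρ) := (Metric.isOpen_ball).add_left
    have hsub : A + Metric.ball ctr ρ ⊆ A + K :=
      Set.add_subset_add_left Metric.ball_subset_closedBall
    have hmem : a + ctr ∈ A + Metric.ball ctr ρ :=
      ⟨a, ha, ctr, Metric.mem_ball_self hρ, rfl⟩
    exact interior_maximal hsub hopen hmem
  have hyE : a + ctr ∈ E := by
    have : f (a + ctr) = 0 := by simp [hctr, hu]
    exact this
  have hpos : 0 < volume ((↑) ⁻¹' (A + K) : Set E) := by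
    have hSopen : IsOpen ((↑) ⁻¹' (interior (A + K)) : Set E) :=
      isOpen_interior.preimage continuous_subtype_val
    have hSne : ((↑) ⁻¹' (interior (A + K)) : Set E).Nonempty := ⟨⟨a + ctr, hyE⟩, hy⟩
    have h0 : 0 < volume ((↑) ⁻¹' (interior (A + K)) : Set E) := hSopen.measure_pos _ hSne
    exact h0.trans_le (measure_mono (Set.preimage_mono interior_subset))
  rw [hBz] at hle
  simp only [measure_empty, nonpos_iff_eq_zero] at hle
  rw [hle] at hpos
  exact lt_irrefl 0 hpos

lemma exists_center (n : ℕ) {B : Set (EuclideanSpace ℝ (Fin n))}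
    (hB₁ : IsCompact B) (hB₂ : Convex ℝ B) (hne : B.Nonempty) :
    ∃ c, B - B ⊆ ((n : ℝ) + 1) • ((fun b => b + c) '' B) := by
  classical
  obtain ⟨b₀, hb₀⟩ := hne
  have hn1 : ((n : ℝ) + 1) ≠ 0 := by positivity
  set F : (↥B × ↥B) → Set (EuclideanSpace ℝ (Fin n)) :=
    fun i => (fun β => ((n : ℝ) + 1)⁻¹ • ((i.1 : EuclideanSpace ℝ (Fin n)) - (i.2 : EuclideanSpace ℝ (Fin n))) - β) '' B with hF
  have hcvx : ∀ i, Convex ℝ (F i) := by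
    rintro i x ⟨βx, hβx, rfl⟩ y ⟨βy, hβy, rfl⟩ a b ha hb hab
    refine ⟨a • βx + b • βy, hB₂ hβx hβy ha hb hab, ?_⟩
    set v := ((n : ℝ) + 1)⁻¹ • ((i.1 : EuclideanSpace ℝ (Fin n)) - (i.2 : EuclideanSpace ℝ (Fin n)))
    have : a • (v - βx) + b • (v - βy) = (a + b) • v - (a • βx + b • βy) := by module
    rw [this, hab, one_smul]
  have hcpt : ∀ i, IsCompact (F i) :=
    fun i => hB₁.image (continuous_const.sub continuous_id)
  have hinter : ∀ I : Finset (↥B × ↥B),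
      I.card ≤ Module.finrank ℝ (EuclideanSpace ℝ (Fin n)) + 1 → (⋂ i ∈ I, F i).Nonempty := by
    intro I hIcard
    rw [finrank_euclideanSpace_fin] at hIcard
    set m : ℕ := I.card with hm
    set S : EuclideanSpace ℝ (Fin n) := ∑ i ∈ I, ((i.2 : EuclideanSpace ℝ (Fin n))) with hS
    refine ⟨-(((n : ℝ) + 1)⁻¹ • (S + ((n : ℝ) + 1 - (m : ℝ)) • b₀)), ?_⟩
    simp only [Set.mem_iInter]
    intro i hi
    have hmpos : 0 < (m : ℝ) := by
      have : 0 < m := Finset.card_pos.mpr ⟨i, hi⟩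
      exact_mod_cast this
    set z : (↥B × ↥B) → EuclideanSpace ℝ (Fin n) := fun j => if j = i then (j.1 : EuclideanSpace ℝ (Fin n)) else (j.2 : EuclideanSpace ℝ (Fin n)) with hz
    set Z : EuclideanSpace ℝ (Fin n) := ∑ j ∈ I, z j with hZ
    have hZeq : Z = (i.1 : EuclideanSpace ℝ (Fin n)) - (i.2 : EuclideanSpace ℝ (Fin n)) + S := by
      rw [hZ, hS, ← Finset.sum_erase_add I z hi, ← Finset.sum_erase_add I _ hi]
      have : ∑ j ∈ I.erase i, z j = ∑ j ∈ I.erase i, ((j.2 : EuclideanSpace ℝ (Fin n))) := by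
        apply Finset.sum_congr rfl
        intro j hj
        simp [hz, Finset.ne_of_mem_erase hj]
      rw [this]
      simp [hz]
      abel
    have hy : (m : ℝ)⁻¹ • Z ∈ B := by
      have := hB₂.centerMass_mem (t := I) (w := fun _ => (1:ℝ)) (z := z)
        (fun _ _ => zero_le_one) (by simpa [hm] using hmpos) ?_
      · simpa [Finset.centerMass, hZ, hm] using this
      · intro j hj
        by_cases hji : j = i
        · subst hji; simpa [hz] using j.1.2
        · simpa [hz, hji] using j.2.2
    -- the witness β
    refine ⟨((m : ℝ) / ((n : ℝ) + 1)) • ((m : ℝ)⁻¹ • Z)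
        + (((n : ℝ) + 1 - (m : ℝ)) / ((n : ℝ) + 1)) • b₀, ?_, ?_⟩
    · apply hB₂ hy hb₀
      · positivity
      · apply div_nonneg _ (by positivity)
        have : (m : ℝ) ≤ (n : ℝ) + 1 := by exact_mod_cast hIcard
        linarith
      · field_simp
        ring
    · rw [smul_smul]
      have hcoef : (m : ℝ) / ((n : ℝ) + 1) * (m : ℝ)⁻¹ = ((n : ℝ) + 1)⁻¹ := by
        field_simp
      rw [hcoef, hZeq]
      module
  obtain ⟨c, hc⟩ := Convex.helly_theorem_compact' (𝕜 := ℝ) hcvx hcpt hinter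
  refine ⟨c, ?_⟩
  rintro w ⟨b₁, hb₁, b₂, hb₂, rfl⟩
  have hcmem : c ∈ F (⟨b₁, hb₁⟩, ⟨b₂, hb₂⟩) := by
    have := Set.mem_iInter.mp hc (⟨b₁, hb₁⟩, ⟨b₂, hb₂⟩)
    exact this
  obtain ⟨β, hβ, hβeq⟩ := hcmem
  refine Set.mem_smul_set.mpr ⟨β + c, ⟨β, hβ, rfl⟩, ?_⟩
  have : β + c = ((n : ℝ) + 1)⁻¹ • (b₁ - b₂) := by
    rw [← hβeq]; module
  rw [this, smul_smul, mul_inv_cancel₀ hn1, one_smul]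

/-- **Theorem (non-symmetric bodies: hyperplane sections of Minkowski sums).**
If `A`, `B` are convex bodies in `ℝⁿ`, `n ≥ 2`, and for every convex body `K`
and every `(n-1)`-dimensional subspace `E` one has
`vol_{n-1}(E ∩ (A + K)) ≤ vol_{n-1}(E ∩ (B + K))`, then `A - A ⊆ B - B`;
in particular there are `x_A, x_B` with `A + x_A ⊆ B - B ⊆ (n+1)(B + x_B)`. -/
theorem diff_subset_of_section_sums (n : ℕ) (hn : 2 ≤ n)
    (A B : Set (EuclideanSpace ℝ (Fin n)))
    (hA₁ : IsCompact A) (hA₂ : Convex ℝ A) (hA₃ : (interior A).Nonempty)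
    (hB₁ : IsCompact B) (hB₂ : Convex ℝ B) (hB₃ : (interior B).Nonempty)
    (h : ∀ K : Set (EuclideanSpace ℝ (Fin n)),
        IsCompact K → Convex ℝ K → (interior K).Nonempty →
        ∀ E : Submodule ℝ (EuclideanSpace ℝ (Fin n)), Module.finrank ℝ E = n - 1 →
        volume ((↑) ⁻¹' (A + K) : Set E) ≤ volume ((↑) ⁻¹' (B + K) : Set E)) :
    A - A ⊆ B - B ∧
      ∃ x_A x_B : EuclideanSpace ℝ (Fin n),
        (fun a => a + x_A) '' A ⊆ B - B ∧
        B - B ⊆ ((n : ℝ) + 1) • ((fun b => b + x_B) '' B) := by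
  have hBne : B.Nonempty := hB₃.mono interior_subset
  have part1 : A - A ⊆ B - B := by
    intro v hv
    by_contra hvB
    obtain ⟨a₁, ha₁, a₂, ha₂, rfl⟩ := hv
    have hBBc : Convex ℝ (B - B) := hB₂.sub hB₂
    have hBBk : IsCompact (B - B) := by rw [sub_eq_add_neg]; exact hB₁.add hB₁.neg
    obtain ⟨f, t, hfb, hfv⟩ := geometric_hahn_banach_closed_point hBBc hBBk.isClosed hvB
    obtain ⟨b₀, hb₀⟩ := id hBne
    have h0 : (0 : EuclideanSpace ℝ (Fin n)) ∈ B - B := ⟨b₀, hb₀, b₀, hb₀, sub_self _⟩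
    have ht0 : (0:ℝ) < t := by simpa using hfb 0 h0
    have hfvpos : 0 < f (a₁ - a₂) := ht0.trans hfv
    obtain ⟨bp, hbp, hbpmax⟩ := hB₁.exists_isMaxOn hBne f.continuous.continuousOn
    obtain ⟨bm, hbm, hbmmin⟩ := hB₁.exists_isMinOn hBne f.continuous.continuousOn
    have hwB : f bp - f bm < f a₁ - f a₂ := by
      have h1 := (hfb (bp - bm) ⟨bp, hbp, bm, hbm, rfl⟩).trans hfv
      simpa [map_sub] using h1
    set u : EuclideanSpace ℝ (Fin n) := (f (a₁ - a₂))⁻¹ • (a₁ - a₂) with hu'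
    have hu : f u = 1 := by
      rw [hu', _root_.map_smul, smul_eq_mul]
      exact inv_mul_cancel₀ (ne_of_gt hfvpos)
    have hfsub : f (a₁ - a₂) = f a₁ - f a₂ := map_sub f a₁ a₂
    rcases lt_or_ge (f bp) (f a₁) with hcase | hcase
    · exact aux_contra n h f u hu a₁ ha₁ (f bp) (fun b hb => hbpmax hb) hcase
    · have hcase2 : f a₂ < f bm := by linarith
      exact aux_contra n h (-f) (-u) (by simp [hu]) a₂ ha₂ (-(f bm))
        (fun b hb => by simpa [ContinuousLinearMap.neg_apply] using hbmmin hb) (by simpa using hcase2)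
  refine ⟨part1, ?_⟩
  obtain ⟨a₀, ha₀⟩ := hA₃
  obtain ⟨c, hc⟩ := exists_center n hB₁ hB₂ hBne
  refine ⟨-a₀, c, ?_, hc⟩
  rintro x ⟨a, ha, rfl⟩
  exact part1 ⟨a, ha, a₀, interior_subset ha₀, by simp [sub_eq_add_neg]⟩
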